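/- arXiv:1207.6134 — 2 statements merged into one kernel-verified Lean document; each statement's English description precedes it below -/
import Mathlib

section
/- Let (a_n)_{n≥1} be a sequence of complex numbers and suppose there is α > 0 and ε ∈ (0, 1/2) such that |∑_{m ≤ M} a_m e^{2πi m x}| ≤ α * M^{1/2 + ε} for all integers M ≥ 1, for a fixed real x. Then for all y ∈ (0, 1], |y * ∑_{n=1}^∞ (∑_{m≤n} a_m e^{2πimx} − ∑_{m≤n−1} a_m e^{2πimx}) * n^{1/2} * e^{−2π n y}| ≤ C_ε * α * y^{−ε} for a constant C_ε depending only on ε. Equivalently, |y ∑_{n≥1} a_n n^{1/2} e^{2πi n x} e^{−2π n y}| ≤ C_ε α y^{−ε}. -/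
open Real Finset


lemma key1 (t s : ℝ) (ht : 0 ≤ t) (hs : 0 ≤ s) (hs2 : s ≤ 2) :
    t ^ s ≤ Real.exp (Real.pi * t) := by
  rcases le_or_gt t 1 with h1 | h1
  · calc t ^ s ≤ 1 := Real.rpow_le_one ht h1 hs
    _ ≤ Real.exp (Real.pi * t) := Real.one_le_exp (by positivity)
  · have h1' : (1:ℝ) ≤ t := h1.le
    calc t ^ s ≤ t ^ (2:ℝ) := Real.rpow_le_rpow_of_exponent_le h1' hs2
      _ = t ^ (2:ℕ) := by rw [← Real.rpow_natCast]; norm_num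
      _ ≤ Real.exp t ^ (2:ℕ) := by
          have := Real.add_one_le_exp t
          exact pow_le_pow_left₀ ht (by linarith) 2
      _ = Real.exp (2 * t) := by rw [← Real.exp_nat_mul]; push_cast; ring_nf
      _ ≤ Real.exp (Real.pi * t) := by
          apply Real.exp_le_exp.mpr; nlinarith [Real.pi_gt_three]

lemma key2 (y s : ℝ) (hy : 0 < y) (hs : 0 ≤ s) (hs2 : s ≤ 2) (n : ℕ) :
    (n:ℝ) ^ s * Real.exp (-(2*Real.pi) * n * y) ≤ y ^ (-s) * Real.exp (-(Real.pi*y)) ^ n := by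
  have hn : (0:ℝ) ≤ (n:ℝ) := n.cast_nonneg
  have hny : (0:ℝ) ≤ (n:ℝ) * y := by positivity
  have h1 : (n:ℝ)^s * y^s ≤ Real.exp (Real.pi * y * n) := by
    have := key1 ((n:ℝ)*y) s hny hs hs2
    rw [Real.mul_rpow hn hy.le] at this
    convert this using 2
    ring
  have hys : (0:ℝ) < y ^ s := Real.rpow_pos_of_pos hy s
  have key : (n:ℝ)^s * Real.exp (-(Real.pi*y*n)) ≤ y ^ (-s) := by
    have hdiv : (n:ℝ)^s / Real.exp (Real.pi*y*n) ≤ 1 / y^s := by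
      rw [div_le_div_iff₀ (Real.exp_pos _) hys]
      nlinarith
    calc (n:ℝ)^s * Real.exp (-(Real.pi*y*n)) = (n:ℝ)^s / Real.exp (Real.pi*y*n) := by
          rw [Real.exp_neg, div_eq_mul_inv]
      _ ≤ 1 / y^s := hdiv
      _ = y ^ (-s) := by rw [Real.rpow_neg hy.le, one_div]
  have h3 : Real.exp (-(Real.pi*y)) ^ n = Real.exp (-(Real.pi * y * n)) := by
    rw [← Real.exp_nat_mul]; ring_nf
  have h4 : Real.exp (-(2*Real.pi) * n * y) = Real.exp (-(Real.pi*y*n)) * Real.exp (-(Real.pi*y*n)) := by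
    rw [← Real.exp_add]; ring_nf
  rw [h3, h4]
  have hE : (0:ℝ) < Real.exp (-(Real.pi*y*n)) := Real.exp_pos _
  nlinarith [Real.rpow_nonneg hn s]

lemma key3 (y : ℝ) (hy : 0 < y) (hy1 : y ≤ 1) :
    ∑' n:ℕ, Real.exp (-(Real.pi*y)) ^ n ≤ Real.exp Real.pi / (Real.pi * y) := by
  have hpy : 0 < Real.pi * y := by positivity
  have hr0 : (0:ℝ) ≤ Real.exp (-(Real.pi*y)) := (Real.exp_pos _).le
  have hr1 : Real.exp (-(Real.pi*y)) < 1 := by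
    rw [Real.exp_lt_one_iff]; linarith
  rw [tsum_geometric_of_lt_one hr0 hr1]
  have hlow : Real.pi * y / Real.exp Real.pi ≤ 1 - Real.exp (-(Real.pi*y)) := by
    have h1 : 1 + Real.pi * y ≤ Real.exp (Real.pi * y) := by have := Real.add_one_le_exp (Real.pi*y); linarith
    have h2 : Real.exp (-(Real.pi*y)) = (Real.exp (Real.pi*y))⁻¹ := by rw [Real.exp_neg]
    have h3 : Real.exp (Real.pi * y) ≤ Real.exp Real.pi := by
      apply Real.exp_le_exp.mpr; nlinarith [Real.pi_pos]
    have hE : 0 < Real.exp (Real.pi * y) := Real.exp_pos _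
    have hEp : 0 < Real.exp Real.pi := Real.exp_pos _
    rw [h2, div_le_iff₀ hEp]
    have : (1 - (Real.exp (Real.pi*y))⁻¹) * Real.exp (Real.pi*y) = Real.exp (Real.pi*y) - 1 := by
      field_simp
    nlinarith [inv_nonneg.mpr hE.le]
  have hpos : 0 < 1 - Real.exp (-(Real.pi*y)) := by linarith
  calc (1 - Real.exp (-(Real.pi*y)))⁻¹ ≤ (Real.pi * y / Real.exp Real.pi)⁻¹ := by
        apply inv_anti₀ (by positivity) hlow
    _ = Real.exp Real.pi / (Real.pi * y) := by rw [inv_div]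

lemma gdiff_core (s t E D p : ℝ) (hspos : 0 < s) (hst : s ≤ t)
    (hts : t - s ≤ 1/(2*s)) (hEpos : 0 < E) (hDpos : 0 < D) (hD1 : D ≤ 1)
    (hp : 0 < p) (hDlow : 1 - p ≤ D) :
    |s*E - t*(E*D)| ≤ (p*s + (1/2)*s⁻¹) * E := by
  have hb1 : 0 ≤ s*E - s*(E*D) := by nlinarith [mul_nonneg (mul_pos hspos hEpos).le (by linarith : (0:ℝ) ≤ 1 - D)]
  have hb1' : s*E - s*(E*D) ≤ p*s*E := by
    nlinarith [mul_le_mul_of_nonneg_left hDlow (mul_pos hspos hEpos).le]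
  have hb2 : 0 ≤ (t - s)*(E*D) := mul_nonneg (by linarith) (mul_pos hEpos hDpos).le
  have hb2' : (t-s)*(E*D) ≤ (1/2)*s⁻¹*E := by
    have h1 : (t-s)*(E*D) ≤ (1/(2*s))*(E*D) :=
      mul_le_mul_of_nonneg_right hts (by positivity)
    have h2 : (1/(2*s))*(E*D) ≤ (1/(2*s))*E := by
      have : E*D ≤ E := by nlinarith
      exact mul_le_mul_of_nonneg_left this (by positivity)
    have h3 : (1/(2*s))*E = (1/2)*s⁻¹*E := by field_simp
    linarith
  rw [abs_le]
  constructor <;> nlinarith [mul_pos hspos hEpos]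

lemma gdiff (y : ℝ) (hy : 0 < y) (n : ℕ) (hn : 1 ≤ n) :
    |(n:ℝ)^((1:ℝ)/2) * Real.exp (-2*Real.pi*n*y)
       - ((n+1:ℕ):ℝ)^((1:ℝ)/2) * Real.exp (-2*Real.pi*(n+1:ℕ)*y)|
      ≤ (2*Real.pi*y*(n:ℝ)^((1:ℝ)/2) + (1/2)*(n:ℝ)^(-((1:ℝ)/2))) * Real.exp (-2*Real.pi*n*y) := by
  have hn0 : (0:ℝ) < (n:ℝ) := by exact_mod_cast hn
  have hs : (n:ℝ)^((1:ℝ)/2) = Real.sqrt n := by rw [Real.sqrt_eq_rpow]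
  have ht : ((n+1:ℕ):ℝ)^((1:ℝ)/2) = Real.sqrt ((n:ℝ)+1) := by
    rw [Real.sqrt_eq_rpow]; push_cast; ring_nf
  have hsinv : (n:ℝ)^(-((1:ℝ)/2)) = (Real.sqrt n)⁻¹ := by
    rw [Real.rpow_neg hn0.le, hs]
  set s := Real.sqrt (n:ℝ) with hsdef
  set t := Real.sqrt ((n:ℝ)+1) with htdef
  have hs2 : s^2 = n := Real.sq_sqrt hn0.le
  have ht2 : t^2 = (n:ℝ)+1 := Real.sq_sqrt (by linarith)
  have hspos : 0 < s := Real.sqrt_pos.mpr hn0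
  have htpos : 0 < t := Real.sqrt_pos.mpr (by linarith)
  have hst : s ≤ t := Real.sqrt_le_sqrt (by linarith)
  have hts : t - s ≤ 1/(2*s) := by
    rw [le_div_iff₀ (by linarith)]
    nlinarith
  have hE' : Real.exp (-2*Real.pi*(n+1:ℕ)*y) = Real.exp (-2*Real.pi*n*y) * Real.exp (-(2*Real.pi*y)) := by
    rw [← Real.exp_add]; push_cast; ring_nf
  set E := Real.exp (-2*Real.pi*n*y) with hEdef
  set D := Real.exp (-(2*Real.pi*y)) with hDdef
  have hEpos : 0 < E := Real.exp_pos _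
  have hDpos : 0 < D := Real.exp_pos _
  have hD1 : D ≤ 1 := Real.exp_le_one_iff.mpr (by nlinarith [Real.pi_pos])
  have hDlow : 1 - 2*Real.pi*y ≤ D := by
    have := Real.add_one_le_exp (-(2*Real.pi*y)); linarith
  rw [hs, ht, hsinv, hE']
  exact gdiff_core s t E D (2*Real.pi*y) hspos hst hts hEpos hDpos hD1 (by positivity) hDlow

/-- if the twisted partial sums of `(a_n)` satisfy
`|∑_{m ≤ M} a_m e(mx)| ≤ α M^(1/2+ε)` for all `M ≥ 1`, then for `0 < y ≤ 1`,
`|y ∑_{n ≥ 1} a_n n^(1/2) e(nx) e^{-2πny}| ≤ C_ε α y^{-ε}`, where `C_ε` depends only on `ε`. -/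
theorem stmt_3 (ε : ℝ) (hε : 0 < ε) (hε' : ε < 1 / 2) :
    ∃ C : ℝ, 0 < C ∧
      ∀ (a : ℕ → ℂ) (x α : ℝ), 0 < α →
        (∀ M : ℕ, 1 ≤ M →
          ‖∑ m ∈ Finset.Icc 1 M, a m * Complex.exp (2 * (Real.pi : ℂ) * Complex.I * m * x)‖
            ≤ α * (M : ℝ) ^ ((1 : ℝ) / 2 + ε)) →
        ∀ y : ℝ, 0 < y → y ≤ 1 →
          ‖(y : ℂ) * ∑' n : ℕ,
              a (n + 1) * (((n + 1 : ℕ) : ℝ) ^ ((1 : ℝ) / 2) : ℝ)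
                * Complex.exp (2 * (Real.pi : ℂ) * Complex.I * (n + 1 : ℕ) * x)
                * (Real.exp (-2 * Real.pi * (n + 1 : ℕ) * y) : ℝ)‖
            ≤ C * α * y ^ (-ε) := by
  refine ⟨(2*Real.pi + 1/2) * Real.exp Real.pi / Real.pi, by positivity, ?_⟩
  intro a x α hα hbound y hy hy1
  set S : ℕ → ℂ := fun M => ∑ m ∈ Finset.Icc 1 M, a m * Complex.exp (2 * (Real.pi : ℂ) * Complex.I * m * x) with hSdef
  set g : ℕ → ℝ := fun n => (n:ℝ) ^ ((1:ℝ)/2) * Real.exp (-2*Real.pi*n*y) with hgdef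
  have hS0 : S 0 = 0 := by simp [hSdef]
  have hstep : ∀ n : ℕ, S (n+1) - S n
      = a (n+1) * Complex.exp (2 * (Real.pi : ℂ) * Complex.I * ((n+1:ℕ):ℂ) * x) := by
    intro n
    have := Finset.sum_Icc_succ_top (a := 1) (b := n) (by omega)
      (f := fun m => a m * Complex.exp (2 * (Real.pi : ℂ) * Complex.I * m * x))
    simp only [hSdef, this]
    push_cast
    ring
  have hfmt : ∀ n : ℕ,
      a (n + 1) * (((n + 1 : ℕ) : ℝ) ^ ((1 : ℝ) / 2) : ℝ)
        * Complex.exp (2 * (Real.pi : ℂ) * Complex.I * (n + 1 : ℕ) * x)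
        * (Real.exp (-2 * Real.pi * (n + 1 : ℕ) * y) : ℝ)
      = (S (n+1) - S n) * ((g (n+1) : ℝ) : ℂ) := by
    intro n
    rw [hstep n, hgdef]
    push_cast
    ring
  set r : ℝ := Real.exp (-(Real.pi * y)) with hrdef
  have hr0 : (0:ℝ) ≤ r := (Real.exp_pos _).le
  have hr1 : r < 1 := by rw [hrdef, Real.exp_lt_one_iff]; nlinarith [mul_pos Real.pi_pos hy]
  have hgeo : Summable (fun n : ℕ => r ^ n) := summable_geometric_of_lt_one hr0 hr1
  have hS' : ∀ n : ℕ, ‖S n‖ ≤ α * (n:ℝ) ^ ((1:ℝ)/2 + ε) := by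
    intro n
    rcases Nat.eq_zero_or_pos n with h | h
    · subst h
      have hne : ((1:ℝ)/2 + ε) ≠ 0 := by positivity
      simp [hS0, Real.zero_rpow hne]
      positivity
    · exact hbound n h
  have hε2 : (1:ℝ)/2 + ε ≤ 2 := by linarith
  -- pointwise bound on the summation-by-parts term
  set v : ℕ → ℂ := fun n => S n * (((g n - g (n+1)) : ℝ) : ℂ) with hvdef
  have hvb : ∀ n : ℕ, ‖v n‖ ≤ (α * (2*Real.pi + 1/2) * y ^ (-ε)) * r ^ n := by
    intro n
    rcases Nat.eq_zero_or_pos n with h | h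
    · subst h
      rw [hvdef]
      simp [hS0]
      positivity
    · have hn0 : (0:ℝ) < (n:ℝ) := by exact_mod_cast h
      have h1 : ‖v n‖ ≤ (α * (n:ℝ) ^ ((1:ℝ)/2 + ε)) *
          ((2*Real.pi*y*(n:ℝ)^((1:ℝ)/2) + (1/2)*(n:ℝ)^(-((1:ℝ)/2))) * Real.exp (-2*Real.pi*n*y)) := by
        rw [hvdef]
        simp only [norm_mul, Complex.norm_real, Real.norm_eq_abs]
        exact mul_le_mul (hS' n) (gdiff y hy n h) (abs_nonneg _) (by positivity)
      have h2 : (α * (n:ℝ) ^ ((1:ℝ)/2 + ε)) *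
          ((2*Real.pi*y*(n:ℝ)^((1:ℝ)/2) + (1/2)*(n:ℝ)^(-((1:ℝ)/2))) * Real.exp (-2*Real.pi*n*y))
          = α * (2*Real.pi*y*((n:ℝ)^((1:ℝ)+ε) * Real.exp (-(2*Real.pi)*n*y))
              + (1/2)*((n:ℝ)^ε * Real.exp (-(2*Real.pi)*n*y))) := by
        have e1 : (n:ℝ)^((1:ℝ)+ε) = (n:ℝ)^((1:ℝ)/2+ε) * (n:ℝ)^((1:ℝ)/2) := by
          rw [← Real.rpow_add hn0]; congr 1; ring
        have e2 : (n:ℝ)^ε = (n:ℝ)^((1:ℝ)/2+ε) * (n:ℝ)^(-((1:ℝ)/2)) := by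
          rw [← Real.rpow_add hn0]; congr 1; ring
        rw [e1, e2]
        ring_nf
      have h3 : (n:ℝ)^((1:ℝ)+ε) * Real.exp (-(2*Real.pi)*n*y) ≤ y ^ (-(1+ε)) * r ^ n := by
        have := key2 y (1+ε) hy (by linarith) (by linarith) n
        convert this using 3 <;> ring_nf
      have h4 : (n:ℝ)^ε * Real.exp (-(2*Real.pi)*n*y) ≤ y ^ (-ε) * r ^ n := by
        have := key2 y ε hy hε.le (by linarith) n
        convert this using 3 <;> ring_nf
      have h5 : y * y ^ (-(1+ε)) = y ^ (-ε) := by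
        rw [show -ε = 1 + (-(1+ε)) by ring, Real.rpow_add hy, Real.rpow_one]
      have hrn : (0:ℝ) ≤ r ^ n := pow_nonneg hr0 n
      calc ‖v n‖ ≤ _ := h1
        _ = _ := h2
        _ ≤ α * (2*Real.pi*y*(y ^ (-(1+ε)) * r ^ n) + (1/2)*(y ^ (-ε) * r ^ n)) := by
            have h6 : 2*Real.pi*y*((n:ℝ)^((1:ℝ)+ε) * Real.exp (-(2*Real.pi)*n*y))
                ≤ 2*Real.pi*y*(y ^ (-(1+ε)) * r ^ n) :=
              mul_le_mul_of_nonneg_left h3 (by positivity)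
            have h7 : (1/2)*((n:ℝ)^ε * Real.exp (-(2*Real.pi)*n*y)) ≤ (1/2)*(y ^ (-ε) * r ^ n) :=
              mul_le_mul_of_nonneg_left h4 (by norm_num)
            have := add_le_add h6 h7
            exact mul_le_mul_of_nonneg_left this hα.le
        _ = (α * (2*Real.pi + 1/2) * y ^ (-ε)) * r ^ n := by
            rw [show 2*Real.pi*y*(y ^ (-(1+ε)) * r ^ n) = 2*Real.pi*(y * y ^ (-(1+ε))) * r ^ n by ring, h5]
            ring
  have hvnorm_sum : Summable (fun n => ‖v n‖) :=
    Summable.of_nonneg_of_le (fun n => norm_nonneg _) hvb (hgeo.mul_left _)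
  have hv : Summable v := hvnorm_sum.of_norm
  have htsum_v : ∑' n, ‖v n‖ ≤ (α * (2*Real.pi + 1/2) * y ^ (-ε)) * (Real.exp Real.pi / (Real.pi * y)) := by
    calc ∑' n, ‖v n‖ ≤ ∑' n, (α * (2*Real.pi + 1/2) * y ^ (-ε)) * r ^ n :=
          Summable.tsum_le_tsum hvb hvnorm_sum (hgeo.mul_left _)
      _ = (α * (2*Real.pi + 1/2) * y ^ (-ε)) * ∑' n, r ^ n := tsum_mul_left
      _ ≤ _ := by
          apply mul_le_mul_of_nonneg_left _ (by positivity)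
          rw [hrdef]
          exact key3 y hy hy1
  set F : ℕ → ℂ := fun n => (S (n+1) - S n) * ((g (n+1) : ℝ) : ℂ) with hFdef
  have hexp : (0:ℝ) < (1:ℝ)/2 + ε := by linarith
  have hFb : ∀ n : ℕ, ‖F n‖ ≤ (2 * α * y ^ (-(1+ε))) * r ^ n := by
    intro n
    have hmono : ‖S n‖ ≤ α * ((n+1:ℕ):ℝ) ^ ((1:ℝ)/2 + ε) := by
      refine (hS' n).trans (mul_le_mul_of_nonneg_left ?_ hα.le)
      apply Real.rpow_le_rpow (n.cast_nonneg) (by push_cast; linarith) hexp.le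
    have hnorm_diff : ‖S (n+1) - S n‖ ≤ 2 * α * ((n+1:ℕ):ℝ) ^ ((1:ℝ)/2 + ε) := by
      calc ‖S (n+1) - S n‖ ≤ ‖S (n+1)‖ + ‖S n‖ := norm_sub_le _ _
        _ ≤ α * ((n+1:ℕ):ℝ) ^ ((1:ℝ)/2 + ε) + α * ((n+1:ℕ):ℝ) ^ ((1:ℝ)/2 + ε) :=
            add_le_add (hS' (n+1)) hmono
        _ = 2 * α * ((n+1:ℕ):ℝ) ^ ((1:ℝ)/2 + ε) := by ring
    have hgpos : (0:ℝ) ≤ g (n+1) := by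
      rw [hgdef]; positivity
    have hn1 : (0:ℝ) < ((n+1:ℕ):ℝ) := by positivity
    have h1 : ‖F n‖ ≤ (2 * α * ((n+1:ℕ):ℝ) ^ ((1:ℝ)/2 + ε)) * g (n+1) := by
      rw [hFdef]
      simp only [norm_mul, Complex.norm_real, Real.norm_eq_abs, abs_of_nonneg hgpos]
      exact mul_le_mul_of_nonneg_right hnorm_diff hgpos
    have e1 : ((n+1:ℕ):ℝ) ^ ((1:ℝ)/2 + ε) * ((n+1:ℕ):ℝ) ^ ((1:ℝ)/2) = ((n+1:ℕ):ℝ) ^ ((1:ℝ)+ε) := by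
      rw [← Real.rpow_add hn1]; congr 1; ring
    have h2 : (2 * α * ((n+1:ℕ):ℝ) ^ ((1:ℝ)/2 + ε)) * g (n+1)
        = 2 * α * (((n+1:ℕ):ℝ) ^ ((1:ℝ)+ε) * Real.exp (-(2*Real.pi)*(n+1:ℕ)*y)) := by
      rw [hgdef]
      simp only []
      rw [show (2 * α * ((n+1:ℕ):ℝ) ^ ((1:ℝ)/2 + ε)) * (((n+1:ℕ):ℝ) ^ ((1:ℝ)/2) * Real.exp (-2*Real.pi*(n+1:ℕ)*y))
        = 2 * α * ((((n+1:ℕ):ℝ) ^ ((1:ℝ)/2 + ε) * ((n+1:ℕ):ℝ) ^ ((1:ℝ)/2)) * Real.exp (-2*Real.pi*(n+1:ℕ)*y)) by ring, e1]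
      ring_nf
    have h3 : ((n+1:ℕ):ℝ) ^ ((1:ℝ)+ε) * Real.exp (-(2*Real.pi)*(n+1:ℕ)*y) ≤ y ^ (-(1+ε)) * r ^ (n+1) := by
      have := key2 y (1+ε) hy (by linarith) (by linarith) (n+1)
      rw [hrdef]
      convert this using 3 <;> ring_nf
    have h4 : r ^ (n+1) ≤ r ^ n := pow_le_pow_of_le_one hr0 hr1.le (by omega)
    calc ‖F n‖ ≤ _ := h1
      _ = _ := h2
      _ ≤ 2 * α * (y ^ (-(1+ε)) * r ^ (n+1)) := by
          exact mul_le_mul_of_nonneg_left h3 (by positivity)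
      _ ≤ 2 * α * (y ^ (-(1+ε)) * r ^ n) := by
          apply mul_le_mul_of_nonneg_left _ (by positivity)
          exact mul_le_mul_of_nonneg_left h4 (by positivity)
      _ = (2 * α * y ^ (-(1+ε))) * r ^ n := by ring
  have hF : Summable F :=
    Summable.of_norm (Summable.of_nonneg_of_le (fun n => norm_nonneg _) hFb (hgeo.mul_left _))
  set u : ℕ → ℂ := fun n => S n * ((g n : ℝ) : ℂ) with hudef
  have hFv : ∀ n : ℕ, F n - v n = u (n+1) - u n := by
    intro n
    rw [hFdef, hvdef, hudef]
    push_cast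
    ring
  have hh : Summable (fun n => u (n+1) - u n) := (hF.sub hv).congr hFv
  have hu0 : u 0 = 0 := by rw [hudef]; simp [hS0]
  have hub : ∀ n : ℕ, ‖u n‖ ≤ (α * y ^ (-(1+ε))) * r ^ n := by
    intro n
    rcases Nat.eq_zero_or_pos n with h | h
    · subst h
      rw [hu0]
      simp
      positivity
    · have hn0 : (0:ℝ) < (n:ℝ) := by exact_mod_cast h
      have hgpos : (0:ℝ) ≤ g n := by rw [hgdef]; positivity
      have h1 : ‖u n‖ ≤ (α * (n:ℝ) ^ ((1:ℝ)/2 + ε)) * g n := by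
        rw [hudef]
        simp only [norm_mul, Complex.norm_real, Real.norm_eq_abs, abs_of_nonneg hgpos]
        exact mul_le_mul_of_nonneg_right (hS' n) hgpos
      have e1 : (n:ℝ) ^ ((1:ℝ)/2 + ε) * (n:ℝ) ^ ((1:ℝ)/2) = (n:ℝ) ^ ((1:ℝ)+ε) := by
        rw [← Real.rpow_add hn0]; congr 1; ring
      have h2 : (α * (n:ℝ) ^ ((1:ℝ)/2 + ε)) * g n
          = α * ((n:ℝ) ^ ((1:ℝ)+ε) * Real.exp (-(2*Real.pi)*n*y)) := by
        rw [hgdef]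
        simp only []
        rw [show (α * (n:ℝ) ^ ((1:ℝ)/2 + ε)) * ((n:ℝ) ^ ((1:ℝ)/2) * Real.exp (-2*Real.pi*n*y))
          = α * (((n:ℝ) ^ ((1:ℝ)/2 + ε) * (n:ℝ) ^ ((1:ℝ)/2)) * Real.exp (-2*Real.pi*n*y)) by ring, e1]
        ring_nf
      have h3 : (n:ℝ) ^ ((1:ℝ)+ε) * Real.exp (-(2*Real.pi)*n*y) ≤ y ^ (-(1+ε)) * r ^ n := by
        have := key2 y (1+ε) hy (by linarith) (by linarith) n
        rw [hrdef]
        convert this using 3 <;> ring_nf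
      calc ‖u n‖ ≤ _ := h1
        _ = _ := h2
        _ ≤ α * (y ^ (-(1+ε)) * r ^ n) := mul_le_mul_of_nonneg_left h3 hα.le
        _ = (α * y ^ (-(1+ε))) * r ^ n := by ring
  have hulim : Filter.Tendsto u Filter.atTop (nhds 0) := by
    rw [tendsto_zero_iff_norm_tendsto_zero]
    have hgeo0 : Filter.Tendsto (fun n : ℕ => (α * y ^ (-(1+ε))) * r ^ n) Filter.atTop (nhds 0) := by
      rw [show (0:ℝ) = (α * y ^ (-(1+ε))) * 0 by ring]
      exact (tendsto_pow_atTop_nhds_zero_of_lt_one hr0 hr1).const_mul _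
    exact squeeze_zero (fun n => norm_nonneg _) hub hgeo0
  have htel : Filter.Tendsto (fun N => ∑ i ∈ Finset.range N, (u (i+1) - u i)) Filter.atTop (nhds 0) := by
    have : ∀ N, ∑ i ∈ Finset.range N, (u (i+1) - u i) = u N := by
      intro N
      rw [Finset.sum_range_sub, hu0, sub_zero]
    simpa only [this] using hulim
  have hsum0 : ∑' n, (u (n+1) - u n) = 0 :=
    tendsto_nhds_unique hh.hasSum.tendsto_sum_nat htel
  have hFveq : ∑' n, F n = ∑' n, v n := by
    have h1 : ∑' n, (F n - v n) = ∑' n, F n - ∑' n, v n := Summable.tsum_sub hF hv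
    have h2 : ∑' n, (F n - v n) = 0 := by rw [tsum_congr hFv]; exact hsum0
    have := h1.symm.trans h2
    exact sub_eq_zero.mp this
  rw [tsum_congr hfmt]
  have hgoal : ‖(y:ℂ) * ∑' n, F n‖ ≤ y * ∑' n, ‖v n‖ := by
    rw [hFveq, norm_mul, Complex.norm_real, Real.norm_eq_abs, abs_of_pos hy]
    exact mul_le_mul_of_nonneg_left (norm_tsum_le_tsum_norm hvnorm_sum) hy.le
  refine hgoal.trans ?_
  calc y * ∑' n, ‖v n‖
      ≤ y * ((α * (2*Real.pi + 1/2) * y ^ (-ε)) * (Real.exp Real.pi / (Real.pi * y))) :=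
        mul_le_mul_of_nonneg_left htsum_v hy.le
    _ = (2*Real.pi + 1/2) * Real.exp Real.pi / Real.pi * α * y ^ (-ε) := by
        field_simp
end

section
/- Let p be a prime and z = a/p + i/p³ with a an integer coprime to p. Then Im(z) = p^{−3}, and for every γ = [[α,β],[γ',δ]] ∈ SL₂(ℤ) with p² | γ', one has Im(γ·z) ≤ Im(z); that is, z has maximal imaginary part in its Γ₀(p²)-orbit. -/
/-- for `z = a/p + i/p³` with `gcd(a,p) = 1`, one has `Im z = p⁻³` and
`z` has maximal imaginary part in its `Γ₀(p²)`-orbit. -/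
theorem stmt_8 (p : ℕ) (hp : p.Prime) (a : ℤ) (ha : IsCoprime a (p : ℤ)) :
    (((a : ℂ) / (p : ℂ) + Complex.I / (p : ℂ) ^ 3).im = ((p : ℝ) ^ 3)⁻¹) ∧
    ∀ α β γ δ : ℤ, α * δ - β * γ = 1 → ((p : ℤ) ^ 2 ∣ γ) →
      (((α : ℂ) * ((a : ℂ) / (p : ℂ) + Complex.I / (p : ℂ) ^ 3) + (β : ℂ)) /
          ((γ : ℂ) * ((a : ℂ) / (p : ℂ) + Complex.I / (p : ℂ) ^ 3) + (δ : ℂ))).im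
        ≤ ((a : ℂ) / (p : ℂ) + Complex.I / (p : ℂ) ^ 3).im := by
  have hp0 : (0:ℝ) < p := by exact_mod_cast hp.pos
  obtain ⟨z, hz⟩ : ∃ z : ℂ, z = (a : ℂ) / (p : ℂ) + Complex.I / (p : ℂ) ^ 3 := ⟨_, rfl⟩
  rw [← hz]
  have hz2 : z = (((a:ℝ) / p : ℝ) : ℂ) + ((((p:ℝ)^3)⁻¹ : ℝ) : ℂ) * Complex.I := by
    rw [hz, Complex.ofReal_div, Complex.ofReal_inv, Complex.ofReal_pow]; push_cast; ring
  have hzre : z.re = (a:ℝ) / p := by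
    rw [hz2]
    simp only [Complex.add_re, Complex.ofReal_re, Complex.mul_re, Complex.I_re,
      Complex.I_im, Complex.ofReal_im]
    ring
  have hzim : z.im = ((p:ℝ)^3)⁻¹ := by
    rw [hz2]
    simp only [Complex.add_im, Complex.ofReal_im, Complex.mul_im, Complex.I_re,
      Complex.I_im, Complex.ofReal_re]
    ring
  refine ⟨hzim, ?_⟩
  rintro α β γ δ hdet ⟨c, hc⟩
  have hdetR : (α:ℝ) * δ - (β:ℝ) * γ = 1 := by exact_mod_cast hdet
  obtain ⟨w, hw⟩ : ∃ w : ℂ, w = (γ : ℂ) * z + (δ : ℂ) := ⟨_, rfl⟩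
  rw [← hw]
  have hwre : w.re = (γ:ℝ) * z.re + δ := by simp [hw]
  have hwim : w.im = (γ:ℝ) * z.im := by simp [hw]
  have hnsq : 1 ≤ Complex.normSq w := by
    rw [Complex.normSq_apply, hwre, hwim, hzre, hzim, hc]
    push_cast
    have hre : ((p:ℝ)^2 * c) * ((a:ℝ)/p) + (δ:ℝ) = ((p * c * a + δ : ℤ) : ℝ) := by
      push_cast; field_simp
    rw [hre]
    rcases eq_or_ne (p * c * a + δ : ℤ) 0 with h0 | h0
    · exfalso
      have hδ : (δ:ℤ) = -(p * c * a) := by linarith [h0]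
      rw [hc, hδ] at hdet
      have : (p:ℤ) ∣ 1 := ⟨-(α * c * a) - β * p * c, by linarith [hdet]⟩
      have := Int.le_of_dvd one_pos this
      have h2 : (2:ℤ) ≤ p := by exact_mod_cast hp.two_le
      omega
    · have h1' : (1:ℤ) ≤ (p * c * a + δ : ℤ)^2 := by
        have := Int.one_le_abs h0
        nlinarith [sq_abs (p * c * a + δ : ℤ)]
      have h1 : (1:ℝ) ≤ ((p * c * a + δ : ℤ) : ℝ)^2 := by exact_mod_cast h1'
      nlinarith [sq_nonneg ((p:ℝ)^2 * (c:ℝ) * ((p:ℝ)^3)⁻¹)]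
  have key : ((α:ℝ) * z.im) * w.re - ((α:ℝ) * z.re + β) * w.im = z.im := by
    rw [hwre, hwim]; linear_combination z.im * hdetR
  have him : (((α : ℂ) * z + (β : ℂ)) / w).im = z.im / Complex.normSq w := by
    rw [Complex.div_im]
    have h1 : ((α:ℂ) * z + (β:ℂ)).im = (α:ℝ) * z.im := by simp
    have h2 : ((α:ℂ) * z + (β:ℂ)).re = (α:ℝ) * z.re + β := by simp
    rw [h1, h2, div_sub_div_same, key]
  rw [him, hzim]
  exact div_le_self (by positivity) hnsq
end
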